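/- Let L = F_{2^l}, q = 2^k with gcd(k,l) = 1, l ≥ 2, and let d ∈ L \ F_2. The number of pairs (x,y) with x, y ∈ L \ F_2 and (x^{q+1} + x)/(y^{q+1} + y) = d equals 2^l - 4 if l is odd; 2^l - 6 if l is even and d is a (q+1)-th power in L^×; and 2^l - 3 if l is even and d is not a (q+1)-th power in L^×. -/

import Mathlib

open Finset

private lemma dvd_iff_pow_eq_one (d n : ℕ) : d ∣ 2 ^ n - 1 ↔ (2 : ZMod d) ^ n = 1 := by
  rw [← ZMod.natCast_eq_zero_iff, Nat.cast_sub Nat.one_le_two_pow]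
  push_cast
  rw [sub_eq_zero]

private lemma dvd_gcd_two_pow {c a b : ℕ} (ha : c ∣ 2 ^ a - 1) (hb : c ∣ 2 ^ b - 1) :
    c ∣ 2 ^ (Nat.gcd a b) - 1 := by
  rw [dvd_iff_pow_eq_one] at ha hb ⊢
  exact pow_gcd_eq_one.mpr ⟨ha, hb⟩

private lemma succ_dvd_sq_sub_one (k : ℕ) : (2 ^ k + 1) ∣ 2 ^ (2 * k) - 1 := by
  rw [dvd_iff_pow_eq_one]
  have h0 : ((2 ^ k + 1 : ℕ) : ZMod (2 ^ k + 1)) = 0 := ZMod.natCast_self _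
  push_cast at h0
  have hneg : (2 : ZMod (2 ^ k + 1)) ^ k = -1 := by linear_combination h0
  rw [mul_comm 2 k, pow_mul, hneg]
  ring

theorem pair_count (k l : ℕ) (hk : 0 < k) (hl : 2 ≤ l) (hgcd : Nat.gcd k l = 1)
    (L : Type) [Field L] [Fintype L] [DecidableEq L] (hcard : Fintype.card L = 2 ^ l)
    (d : L) (hd0 : d ≠ 0) (hd1 : d ≠ 1) :
    (Odd l →
      ((Finset.univ : Finset (L × L)).filter fun p =>
        p.1 ≠ 0 ∧ p.1 ≠ 1 ∧ p.2 ≠ 0 ∧ p.2 ≠ 1 ∧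
        (p.1 ^ (2 ^ k + 1) + p.1) / (p.2 ^ (2 ^ k + 1) + p.2) = d).card = 2 ^ l - 4) ∧
    (Even l → (∃ z : L, z ≠ 0 ∧ z ^ (2 ^ k + 1) = d) →
      ((Finset.univ : Finset (L × L)).filter fun p =>
        p.1 ≠ 0 ∧ p.1 ≠ 1 ∧ p.2 ≠ 0 ∧ p.2 ≠ 1 ∧
        (p.1 ^ (2 ^ k + 1) + p.1) / (p.2 ^ (2 ^ k + 1) + p.2) = d).card = 2 ^ l - 6) ∧
    (Even l → ¬(∃ z : L, z ≠ 0 ∧ z ^ (2 ^ k + 1) = d) →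
      ((Finset.univ : Finset (L × L)).filter fun p =>
        p.1 ≠ 0 ∧ p.1 ≠ 1 ∧ p.2 ≠ 0 ∧ p.2 ≠ 1 ∧
        (p.1 ^ (2 ^ k + 1) + p.1) / (p.2 ^ (2 ^ k + 1) + p.2) = d).card = 2 ^ l - 3) := by
  classical
  haveI : Fact (Nat.Prime 2) := ⟨Nat.prime_two⟩
  -- characteristic 2
  haveI hchar : CharP L 2 := by
    haveI := ringChar.charP L
    obtain ⟨n, hp, hc⟩ := FiniteField.card L (ringChar L)
    have h2 : ringChar L = 2 := by
      have hdvd : ringChar L ∣ 2 ^ l := by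
        rw [← hcard, hc]
        exact dvd_pow_self _ n.2.ne'
      exact (Nat.prime_dvd_prime_iff_eq hp Nat.prime_two).mp (hp.dvd_of_dvd_pow hdvd)
    rwa [h2] at this
  have h2L : (2 : L) = 0 := by exact_mod_cast CharP.cast_eq_zero L 2
  have hne1 : ∀ a : L, a ≠ 1 → a + 1 ≠ 0 := by
    intro a ha h
    exact ha (by linear_combination h - h2L)
  have frob : ∀ a b : L, (a + b) ^ 2 ^ k = a ^ 2 ^ k + b ^ 2 ^ k := fun a b => add_pow_char_pow ..
  -- factorization of F y = y^(q+1) + y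
  have hF : ∀ y : L, y ^ (2 ^ k + 1) + y = y * (y + 1) ^ 2 ^ k := by
    intro y
    rw [frob, one_pow]
    ring
  have hFne : ∀ y : L, y ≠ 0 → y ≠ 1 → y ^ (2 ^ k + 1) + y ≠ 0 := by
    intro y h0 h1
    rw [hF]
    exact mul_ne_zero h0 (pow_ne_zero _ (hne1 y h1))
  -- the target set and the parameter set
  set A : Finset (L × L) := (Finset.univ : Finset (L × L)).filter fun p =>
        p.1 ≠ 0 ∧ p.1 ≠ 1 ∧ p.2 ≠ 0 ∧ p.2 ≠ 1 ∧
        (p.1 ^ (2 ^ k + 1) + p.1) / (p.2 ^ (2 ^ k + 1) + p.2) = d with hA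
  set S : Finset L := Finset.univ.filter
      (fun s : L => s ≠ 0 ∧ s ≠ 1 ∧ s ^ 2 ^ k ≠ d ∧ s ^ (2 ^ k + 1) ≠ d) with hSdef
  have hmemA : ∀ p : L × L, p ∈ A ↔ (p.1 ≠ 0 ∧ p.1 ≠ 1 ∧ p.2 ≠ 0 ∧ p.2 ≠ 1 ∧
      p.1 ^ (2 ^ k + 1) + p.1 = d * (p.2 ^ (2 ^ k + 1) + p.2)) := by
    intro p
    rw [hA, Finset.mem_filter]
    constructor
    · rintro ⟨-, h1, h2, h3, h4, h5⟩
      exact ⟨h1, h2, h3, h4, (div_eq_iff (hFne _ h3 h4)).mp h5⟩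
    · rintro ⟨h1, h2, h3, h4, h5⟩
      exact ⟨Finset.mem_univ _, h1, h2, h3, h4, (div_eq_iff (hFne _ h3 h4)).mpr h5⟩
  -- facts about s = (x+1)/(y+1) for (x,y) ∈ A
  have pfacts : ∀ x y : L, x ≠ 0 → x ≠ 1 → y ≠ 0 → y ≠ 1 →
      x ^ (2 ^ k + 1) + x = d * (y ^ (2 ^ k + 1) + y) →
      ((x + 1) / (y + 1) ≠ 0 ∧ (x + 1) / (y + 1) ≠ 1 ∧
       ((x + 1) / (y + 1)) ^ 2 ^ k ≠ d ∧ ((x + 1) / (y + 1)) ^ (2 ^ k + 1) ≠ d ∧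
       x * ((x + 1) / (y + 1)) ^ 2 ^ k = d * y) := by
    intro x y hx0 hx1 hy0 hy1 heq
    have hy1' : y + 1 ≠ 0 := hne1 y hy1
    have hx1' : x + 1 ≠ 0 := hne1 x hx1
    set s := (x + 1) / (y + 1) with hs
    have hs0 : s ≠ 0 := div_ne_zero hx1' hy1'
    have hxs : x + 1 = s * (y + 1) := (div_mul_cancel₀ _ hy1').symm
    have hkey : x * s ^ 2 ^ k = d * y := by
      have h1 : x * (x + 1) ^ 2 ^ k = d * (y * (y + 1) ^ 2 ^ k) := by
        rw [← hF, ← hF]; exact heq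
      rw [hxs, mul_pow] at h1
      exact mul_right_cancel₀ (pow_ne_zero (2 ^ k) hy1') (by linear_combination h1)
    have hxy : x ≠ y := by
      rintro rfl
      apply hd1
      have hFx := hFne x hx0 hx1
      have h2 : d * (x ^ (2 ^ k + 1) + x) = 1 * (x ^ (2 ^ k + 1) + x) := by
        linear_combination -heq
      exact (mul_right_cancel₀ hFx h2)
    have hs1 : s ≠ 1 := by
      intro h
      rw [h, one_mul] at hxs
      exact hxy (by linear_combination hxs)
    have hsq : s ^ 2 ^ k ≠ d := by
      intro h
      rw [h] at hkey
      exact hxy (mul_left_cancel₀ hd0 (by linear_combination hkey))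
    have hse : s ^ (2 ^ k + 1) ≠ d := by
      intro h
      rw [pow_succ] at h
      have h1 : s ^ 2 ^ k * x = s ^ 2 ^ k * (s * y) := by
        linear_combination hkey - y * h
      have h2 : x = s * y := mul_left_cancel₀ (pow_ne_zero _ hs0) h1
      exact hs1 (by linear_combination h2 - hxs)
    exact ⟨hs0, hs1, hsq, hse, hkey⟩
  -- facts about (x,y) built from s ∈ S
  have jfacts : ∀ s : L, s ≠ 0 → s ≠ 1 → s ^ 2 ^ k ≠ d → s ^ (2 ^ k + 1) ≠ d →
      (d / s ^ 2 ^ k + s ≠ 0 ∧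
       (s + 1) / (d / s ^ 2 ^ k + s) ≠ 0 ∧
       (s + 1) / (d / s ^ 2 ^ k + s) ≠ 1 ∧
       d / s ^ 2 ^ k * ((s + 1) / (d / s ^ 2 ^ k + s)) ≠ 0 ∧
       d / s ^ 2 ^ k * ((s + 1) / (d / s ^ 2 ^ k + s)) ≠ 1 ∧
       d / s ^ 2 ^ k * ((s + 1) / (d / s ^ 2 ^ k + s)) + 1 =
         s * ((s + 1) / (d / s ^ 2 ^ k + s) + 1) ∧
       d / s ^ 2 ^ k * s ^ 2 ^ k = d) := by
    intro s hs0 hs1 hsq hse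
    have hsq0 : s ^ 2 ^ k ≠ 0 := pow_ne_zero _ hs0
    set r := d / s ^ 2 ^ k with hr
    have hrd : r * s ^ 2 ^ k = d := div_mul_cancel₀ _ hsq0
    have hr0 : r ≠ 0 := by
      intro h
      rw [h, zero_mul] at hrd
      exact hd0 hrd.symm
    have hr1 : r ≠ 1 := by
      intro h
      rw [h, one_mul] at hrd
      exact hsq hrd
    have hw0 : r + s ≠ 0 := by
      intro h
      apply hse
      have hrs : r = s := by linear_combination h - s * h2L
      rw [hrs] at hrd
      rw [pow_succ, mul_comm]
      exact hrd
    have hs1' : s + 1 ≠ 0 := hne1 s hs1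
    set y := (s + 1) / (r + s) with hy
    have hy0 : y ≠ 0 := div_ne_zero hs1' hw0
    have hyw : y * (r + s) = s + 1 := div_mul_cancel₀ _ hw0
    have hy1 : y ≠ 1 := by
      intro h
      rw [h, one_mul] at hyw
      exact hr1 (by linear_combination hyw)
    have hx0 : r * y ≠ 0 := mul_ne_zero hr0 hy0
    have hxy1 : r * y + 1 = s * (y + 1) := by
      linear_combination hyw + (1 - s * y) * h2L
    have hx1 : r * y ≠ 1 := by
      intro h
      have h0 : s * (y + 1) = 0 := by
        rw [← hxy1, h]
        linear_combination h2L
      rcases mul_eq_zero.mp h0 with h' | h'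
      · exact hs0 h'
      · exact hne1 y hy1 h'
    exact ⟨hw0, hy0, hy1, hx0, hx1, hxy1, hrd⟩
  -- the bijection
  have hAS : A.card = S.card := by
    refine Finset.card_bij' (fun p _ => (p.1 + 1) / (p.2 + 1))
      (fun s _ => (d / s ^ 2 ^ k * ((s + 1) / (d / s ^ 2 ^ k + s)),
                   (s + 1) / (d / s ^ 2 ^ k + s))) ?hi ?hj ?left ?right
    case hi =>
      intro p hp
      rw [hmemA] at hp
      obtain ⟨hx0, hx1, hy0, hy1, heq⟩ := hp
      obtain ⟨a, b, c, e, -⟩ := pfacts p.1 p.2 hx0 hx1 hy0 hy1 heq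
      rw [hSdef, Finset.mem_filter]
      exact ⟨Finset.mem_univ _, a, b, c, e⟩
    case hj =>
      intro s hs
      rw [hSdef, Finset.mem_filter] at hs
      obtain ⟨-, hs0, hs1, hsq, hse⟩ := hs
      obtain ⟨hw0, hy0, hy1, hx0, hx1, hxy1, hrd⟩ := jfacts s hs0 hs1 hsq hse
      rw [hmemA]
      refine ⟨hx0, hx1, hy0, hy1, ?_⟩
      dsimp only
      rw [hF, hF, hxy1, mul_pow]
      linear_combination ((s + 1) / (d / s ^ 2 ^ k + s) *
        ((s + 1) / (d / s ^ 2 ^ k + s) + 1) ^ 2 ^ k) * hrd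
    case left =>
      intro p hp
      rw [hmemA] at hp
      obtain ⟨hx0, hx1, hy0, hy1, heq⟩ := hp
      obtain ⟨hs0, hs1, hsq, hse, hkey⟩ := pfacts p.1 p.2 hx0 hx1 hy0 hy1 heq
      have hy1' : p.2 + 1 ≠ 0 := hne1 _ hy1
      have hx1' : p.1 + 1 ≠ 0 := hne1 _ hx1
      set s := (p.1 + 1) / (p.2 + 1) with hs
      have hxs : p.1 + 1 = s * (p.2 + 1) := (div_mul_cancel₀ _ hy1').symm
      have hsq0 : s ^ 2 ^ k ≠ 0 := pow_ne_zero _ hs0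
      obtain ⟨hw0, -, -, -, -, -, hrd⟩ := jfacts s hs0 hs1 hsq hse
      have hry : d / s ^ 2 ^ k * p.2 = p.1 := by
        rw [div_mul_eq_mul_div, div_eq_iff hsq0]
        linear_combination -hkey
      have hyy : (s + 1) / (d / s ^ 2 ^ k + s) = p.2 := by
        rw [div_eq_iff hw0]
        linear_combination hxs - hry + (s - p.1) * h2L
      rw [Prod.ext_iff]
      exact ⟨by rw [hyy, hry], hyy⟩
    case right =>
      intro s hs
      rw [hSdef, Finset.mem_filter] at hs
      obtain ⟨-, hs0, hs1, hsq, hse⟩ := hs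
      obtain ⟨hw0, hy0, hy1, hx0, hx1, hxy1, hrd⟩ := jfacts s hs0 hs1 hsq hse
      dsimp only
      rw [hxy1, mul_div_assoc, div_self (hne1 _ hy1), mul_one]
  -- counting S
  have hbij : Function.Bijective (fun a : L => a ^ 2 ^ k) := by
    rw [← Finite.injective_iff_bijective]
    intro a b hab
    simp only at hab
    have hz : (a + b) ^ 2 ^ k = 0 := by
      rw [frob, hab]
      linear_combination b ^ 2 ^ k * h2L
    have := pow_eq_zero_iff (n := 2 ^ k) (pow_ne_zero k two_ne_zero) |>.mp hz
    linear_combination this - b * h2L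
  obtain ⟨s1, hs1d'⟩ := hbij.2 d
  have hs1d : s1 ^ 2 ^ k = d := hs1d'
  have hs1u : ∀ t : L, t ^ 2 ^ k = d → t = s1 := fun t ht => hbij.1 (ht.trans hs1d.symm)
  set T : Finset L := Finset.univ.filter (fun s : L => s ^ (2 ^ k + 1) = d) with hTdef
  have hs10 : s1 ≠ 0 := by
    rintro rfl
    exact hd0 (hs1d.symm.trans (zero_pow (pow_ne_zero k two_ne_zero)))
  have hs11 : s1 ≠ 1 := by
    rintro rfl
    exact hd1 (hs1d.symm.trans (one_pow _))
  have h0T : (0 : L) ∉ T := by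
    rw [hTdef, Finset.mem_filter]
    rintro ⟨-, h⟩
    exact hd0 (h.symm.trans (zero_pow (by positivity)))
  have h1T : (1 : L) ∉ T := by
    rw [hTdef, Finset.mem_filter]
    rintro ⟨-, h⟩
    exact hd1 (h.symm.trans (one_pow _))
  have hs1T : s1 ∉ T := by
    rw [hTdef, Finset.mem_filter]
    rintro ⟨-, h⟩
    have hds : d * s1 = d * 1 := by
      calc d * s1 = s1 ^ 2 ^ k * s1 := by rw [hs1d]
        _ = s1 ^ (2 ^ k + 1) := (pow_succ _ _).symm
        _ = d := h
        _ = d * 1 := (mul_one d).symm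
    exact hs11 (mul_left_cancel₀ hd0 hds)
  have hScard : S.card = 2 ^ l - (3 + T.card) := by
    have hSB : S = Finset.univ \ insert (0 : L) (insert 1 (insert s1 T)) := by
      ext s
      simp only [hSdef, Finset.mem_filter, Finset.mem_univ, true_and, Finset.mem_sdiff,
        Finset.mem_insert, hTdef, not_or]
      constructor
      · rintro ⟨a, b, c, e⟩
        refine ⟨a, b, fun hss => c (hss ▸ hs1d), by simpa using e⟩
      · rintro ⟨a, b, c, e⟩
        exact ⟨a, b, fun hc => c (hs1u s hc), by simpa using e⟩
    have h1i : (1 : L) ∉ insert s1 T := by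
      simp only [Finset.mem_insert, not_or]
      exact ⟨Ne.symm hs11, h1T⟩
    have h0i : (0 : L) ∉ insert 1 (insert s1 T) := by
      simp only [Finset.mem_insert, not_or]
      exact ⟨zero_ne_one, Ne.symm hs10, h0T⟩
    rw [hSB, Finset.card_sdiff_of_subset (Finset.subset_univ _), Finset.card_univ, hcard,
      Finset.card_insert_of_notMem h0i, Finset.card_insert_of_notMem h1i,
      Finset.card_insert_of_notMem hs1T]
    omega
  have hord : ∀ u : L, u ≠ 0 → u ^ (2 ^ k + 1) = 1 →
      orderOf u ∣ 2 ^ Nat.gcd (2 * k) l - 1 := by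
    intro u hu0 hue
    have h1 : orderOf u ∣ 2 ^ k + 1 := orderOf_dvd_of_pow_eq_one hue
    have h2 : orderOf u ∣ 2 ^ l - 1 := by
      apply orderOf_dvd_of_pow_eq_one
      have := FiniteField.pow_card_sub_one_eq_one u hu0
      rwa [hcard] at this
    exact dvd_gcd_two_pow (h1.trans (succ_dvd_sq_sub_one k)) h2
  refine ⟨?_, ?_, ?_⟩
  · -- l odd
    intro hodd
    have hg1 : Nat.gcd (2 * k) l = 1 :=
      Nat.Coprime.mul (Nat.coprime_two_left.mpr hodd) hgcd
    have hinj : ∀ a b : L, a ^ (2 ^ k + 1) = b ^ (2 ^ k + 1) → a = b := by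
      intro a b hab
      rcases eq_or_ne b 0 with rfl | hb0
      · rw [zero_pow (by positivity)] at hab
        exact pow_eq_zero_iff (by positivity) |>.mp hab
      · have ha0 : a ≠ 0 := by
          rintro rfl
          rw [zero_pow (by positivity)] at hab
          exact hb0 (pow_eq_zero_iff (by positivity) |>.mp hab.symm)
        have hu0 : a / b ≠ 0 := div_ne_zero ha0 hb0
        have hue : (a / b) ^ (2 ^ k + 1) = 1 := by
          rw [div_pow, hab, div_self (pow_ne_zero _ hb0)]
        have := hord _ hu0 hue
        rw [hg1] at this
        norm_num at this
        field_simp at this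
        exact this
    have hbij2 : Function.Bijective (fun a : L => a ^ (2 ^ k + 1)) := by
      rw [← Finite.injective_iff_bijective]
      intro a b hab
      exact hinj a b hab
    obtain ⟨s2, hs2'⟩ := hbij2.2 d
    have hs2 : s2 ^ (2 ^ k + 1) = d := hs2'
    have hT1 : T.card = 1 := by
      rw [hTdef]
      rw [Finset.card_eq_one]
      refine ⟨s2, ?_⟩
      ext t
      simp only [Finset.mem_filter, Finset.mem_univ, true_and, Finset.mem_singleton]
      constructor
      · intro ht
        exact hinj t s2 (ht.trans hs2.symm)
      · rintro rfl
        exact hs2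
    rw [hAS, hScard, hT1]
  · -- l even, d a (q+1)-th power
    intro heven hex
    obtain ⟨z, hz0, hze⟩ := hex
    have hko : Odd k := by
      rcases Nat.even_or_odd k with he | ho
      · exfalso
        have h2g : 2 ∣ Nat.gcd k l := Nat.dvd_gcd he.two_dvd heven.two_dvd
        rw [hgcd] at h2g
        norm_num at h2g
      · exact ho
    have hg2 : Nat.gcd (2 * k) l = 2 := by
      apply Nat.dvd_antisymm
      · have h1 : Nat.gcd (2 * k) l ∣ Nat.gcd (2 * k) (2 * l) :=
          Nat.dvd_gcd (Nat.gcd_dvd_left _ _) ((Nat.gcd_dvd_right _ _).trans (dvd_mul_left l 2))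
        rwa [Nat.gcd_mul_left, hgcd, mul_one] at h1
      · exact Nat.dvd_gcd (dvd_mul_right 2 k) heven.two_dvd
    have h3e : (3 : ℕ) ∣ 2 ^ k + 1 := by
      rw [← ZMod.natCast_eq_zero_iff]
      push_cast
      have h23 : (2 : ZMod 3) = -1 := by decide
      rw [h23, hko.neg_one_pow]
      ring
    have h3l : (3 : ℕ) ∣ 2 ^ l - 1 := by
      rw [dvd_iff_pow_eq_one]
      have h23 : (2 : ZMod 3) = -1 := by decide
      rw [h23, heven.neg_one_pow]
    have hcube : ∀ w : L, w ≠ 0 → (w ^ (2 ^ k + 1) = 1 ↔ w ^ 3 = 1) := by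
      intro w hw
      constructor
      · intro h
        have h1 := hord w hw h
        rw [hg2] at h1
        norm_num at h1
        exact orderOf_dvd_iff_pow_eq_one.mp h1
      · intro h
        obtain ⟨c, hc⟩ := h3e
        rw [hc, pow_mul, h, one_pow]
    set K := Finset.univ.filter (fun w : L => w ^ 3 = 1) with hKdef
    have hTK : T.card = K.card := by
      apply Finset.card_bij' (fun s _ => s / z) (fun w _ => z * w)
      · intro s hs
        rw [hTdef, Finset.mem_filter] at hs
        have hs0 : s ≠ 0 := by
          rintro rfl
          exact hd0 (by simpa [zero_pow] using hs.2.symm)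
        rw [hKdef, Finset.mem_filter]
        refine ⟨Finset.mem_univ _, ?_⟩
        rw [← hcube _ (div_ne_zero hs0 hz0), div_pow, hs.2, hze, div_self hd0]
      · intro w hw
        rw [hKdef, Finset.mem_filter] at hw
        have hw0 : w ≠ 0 := by
          rintro rfl
          simpa [zero_pow] using hw.2
        rw [hTdef, Finset.mem_filter]
        refine ⟨Finset.mem_univ _, ?_⟩
        rw [mul_pow, hze, (hcube w hw0).mpr hw.2, mul_one]
      · intro s hs
        rw [mul_comm, div_mul_cancel₀ _ hz0]
      · intro w hw
        rw [mul_div_cancel_left₀ _ hz0]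
    have hK3 : K.card = 3 := by
      have hle : K.card ≤ 3 := by
        have hpne : ((Polynomial.X : Polynomial L) ^ 3 - Polynomial.C 1) ≠ 0 :=
          Polynomial.X_pow_sub_C_ne_zero (by norm_num) 1
        have hsub : K ⊆ ((Polynomial.X : Polynomial L) ^ 3 - Polynomial.C 1).roots.toFinset := by
          intro w hw
          rw [hKdef, Finset.mem_filter] at hw
          rw [Multiset.mem_toFinset, Polynomial.mem_roots hpne]
          simp [Polynomial.IsRoot, sub_eq_zero, hw.2]
        calc K.card ≤ _ := Finset.card_le_card hsub
          _ ≤ Multiset.card ((Polynomial.X : Polynomial L) ^ 3 - Polynomial.C 1).roots :=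
              Multiset.toFinset_card_le _
          _ ≤ ((Polynomial.X : Polynomial L) ^ 3 - Polynomial.C 1).natDegree := Polynomial.card_roots' _
          _ = 3 := Polynomial.natDegree_X_pow_sub_C
      have hge : 3 ≤ K.card := by
        have hdvd3 : (3 : ℕ) ∣ Fintype.card Lˣ := by
          rw [Fintype.card_units, hcard]
          exact h3l
        haveI : Fact (Nat.Prime 3) := ⟨by norm_num⟩
        obtain ⟨ω, hω⟩ := exists_prime_orderOf_dvd_card 3 hdvd3
        set a : L := (ω : L) with ha
        have ha3 : a ^ 3 = 1 := by
          rw [ha, ← Units.val_pow_eq_pow_val, ← hω, pow_orderOf_eq_one, Units.val_one]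
        have ha1 : a ≠ 1 := by
          intro h
          have hh : ω = 1 := Units.val_eq_one.mp h
          rw [hh, orderOf_one] at hω
          norm_num at hω
        have ha0 : a ≠ 0 := Units.ne_zero ω
        have ha2 : a ^ 2 ≠ 1 := by
          intro h
          apply ha1
          calc a = a ^ 2 * a := by rw [h, one_mul]
            _ = a ^ 3 := by ring
            _ = 1 := ha3
        have ha2a : a ^ 2 ≠ a := by
          intro h
          apply ha1
          have hh : a * a = a * 1 := by rw [mul_one, ← sq]; exact h
          exact mul_left_cancel₀ ha0 hh
        have hsub2 : ({(1 : L), a, a ^ 2} : Finset L) ⊆ K := by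
          intro t ht
          rw [hKdef, Finset.mem_filter]
          refine ⟨Finset.mem_univ _, ?_⟩
          simp only [Finset.mem_insert, Finset.mem_singleton] at ht
          rcases ht with rfl | rfl | rfl
          · rw [one_pow]
          · exact ha3
          · rw [← pow_mul, show 2 * 3 = 3 * 2 from rfl, pow_mul, ha3, one_pow]
        have hc3 : ({(1 : L), a, a ^ 2} : Finset L).card = 3 := by
          rw [Finset.card_insert_of_notMem (by
              simp only [Finset.mem_insert, Finset.mem_singleton, not_or]
              exact ⟨Ne.symm ha1, fun h => ha2 h.symm⟩),
            Finset.card_insert_of_notMem (by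
              simp only [Finset.mem_singleton]
              exact fun h => ha2a h.symm),
            Finset.card_singleton]
        calc 3 = _ := hc3.symm
          _ ≤ K.card := Finset.card_le_card hsub2
      omega
    have hT3 : T.card = 3 := by rw [hTK, hK3]
    rw [hAS, hScard, hT3]
  · -- l even, d not a (q+1)-th power
    intro heven hnex
    have hT0 : T.card = 0 := by
      rw [Finset.card_eq_zero, Finset.eq_empty_iff_forall_notMem]
      intro s hs
      rw [hTdef, Finset.mem_filter] at hs
      have hs0 : s ≠ 0 := by
        rintro rfl
        exact hd0 (by simpa using hs.2.symm)
      exact hnex ⟨s, hs0, hs.2⟩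
    rw [hAS, hScard, hT0]
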